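/- arXiv:1707.00281 — 2 statements merged into one kernel-verified Lean document; each statement's English description precedes it below -/
import Mathlib

section
/- Let A ∈ ℝ^{m×n} and let A = P D Qᵀ be a singular value decomposition of A, where P ∈ ℝ^{m×m} and Q ∈ ℝ^{n×n} are orthogonal and D ∈ ℝ^{m×n} is diagonal with non-increasing nonnegative diagonal entries. For r ≥ 0 let D_r be obtained from D by keeping the r largest diagonal entries and replacing the remaining diagonal entries by 0, and set H_r(A) := P D_r Qᵀ. Then rank(H_r(A)) ≤ r, and for every matrix B ∈ ℝ^{m×n} with rank(B) ≤ r one has ‖A − H_r(A)‖_F ≤ ‖A − B‖_F (Eckart–Young theorem for the Frobenius norm: the hard-thresholded SVD solves the unconstrained low-rank approximation problem (3)). -/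
open Matrix

/-- Frobenius norm of a real matrix. -/
noncomputable def frobNorm {m n : ℕ} (A : Matrix (Fin m) (Fin n) ℝ) : ℝ :=
  Real.sqrt (∑ i, ∑ j, (A i j) ^ 2)

/-- Column space of a matrix, as a subspace of Euclidean space. -/
noncomputable def colSpace {m k : ℕ} (A : Matrix (Fin m) (Fin k) ℝ) :
    Submodule ℝ (EuclideanSpace ℝ (Fin m)) :=
  LinearMap.range (Matrix.toEuclideanLin A)

/-- `P_{A₁}`: orthogonal projection onto the column space of `A₁`, applied columnwise. -/
noncomputable def projCols {m k l : ℕ} (A₁ : Matrix (Fin m) (Fin k) ℝ)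
    (B : Matrix (Fin m) (Fin l) ℝ) : Matrix (Fin m) (Fin l) ℝ :=
  Matrix.of fun i j =>
    ((colSpace A₁).orthogonalProjectionOnto (WithLp.toLp 2 (fun i' => B i' j)) : EuclideanSpace ℝ (Fin m)) i

/-- `P⊥_{A₁}`: orthogonal projection onto the orthogonal complement of the column
space of `A₁`, applied columnwise. -/
noncomputable def projOrthCols {m k l : ℕ} (A₁ : Matrix (Fin m) (Fin k) ℝ)
    (B : Matrix (Fin m) (Fin l) ℝ) : Matrix (Fin m) (Fin l) ℝ :=
  Matrix.of fun i j =>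
    ((colSpace A₁)ᗮ.orthogonalProjectionOnto (WithLp.toLp 2 (fun i' => B i' j)) : EuclideanSpace ℝ (Fin m)) i

open Finset
open scoped RealInnerProductSpace

noncomputable def frobSq {m n : ℕ} (A : Matrix (Fin m) (Fin n) ℝ) : ℝ := ∑ i, ∑ j, (A i j)^2

lemma frobSq_nonneg {m n : ℕ} (A : Matrix (Fin m) (Fin n) ℝ) : 0 ≤ frobSq A := by
  unfold frobSq; positivity

lemma frobSq_eq_trace {m n : ℕ} (A : Matrix (Fin m) (Fin n) ℝ) :
    frobSq A = (Aᵀ * A).trace := by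
  simp only [frobSq, Matrix.trace, Matrix.diag, Matrix.mul_apply, Matrix.transpose_apply, sq]
  exact Finset.sum_comm

lemma frobSq_orth_left {m n : ℕ} (P : Matrix (Fin m) (Fin m) ℝ) (M : Matrix (Fin m) (Fin n) ℝ)
    (hP : Pᵀ * P = 1) : frobSq (P * M) = frobSq M := by
  rw [frobSq_eq_trace, frobSq_eq_trace, Matrix.transpose_mul]
  rw [show Mᵀ * Pᵀ * (P * M) = Mᵀ * (Pᵀ * P) * M by simp [Matrix.mul_assoc], hP, Matrix.mul_one]

lemma frobSq_orth_right {m n : ℕ} (M : Matrix (Fin m) (Fin n) ℝ) (Q : Matrix (Fin n) (Fin n) ℝ)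
    (hQ : Qᵀ * Q = 1) : frobSq (M * Qᵀ) = frobSq M := by
  rw [frobSq_eq_trace, frobSq_eq_trace, Matrix.transpose_mul, Matrix.transpose_transpose]
  rw [show Q * Mᵀ * (M * Qᵀ) = Q * ((Mᵀ * M) * Qᵀ) by simp [Matrix.mul_assoc], Matrix.trace_mul_comm,
    show Mᵀ * M * Qᵀ * Q = Mᵀ * M * (Qᵀ * Q) by simp [Matrix.mul_assoc], hQ, Matrix.mul_one]


lemma card_filter_lt (m r : ℕ) (hr : r ≤ m) :
    (Finset.univ.filter (fun i : Fin m => (i : ℕ) < r)).card = r := by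
  have : (Finset.univ.filter (fun i : Fin m => (i : ℕ) < r))
      = Finset.map (Fin.castLEEmb hr) Finset.univ := by
    ext i
    simp only [Finset.mem_filter, Finset.mem_univ, true_and, Finset.mem_map]
    constructor
    · intro h
      refine ⟨⟨i, h⟩, ?_⟩
      ext
      simp [Fin.castLEEmb]
    · rintro ⟨j, rfl⟩
      simpa [Fin.castLEEmb] using j.isLt
  rw [this, Finset.card_map, Finset.card_univ, Fintype.card_fin]

lemma key_scalar (m r : ℕ) (s t : Fin m → ℝ) (hs0 : ∀ i, 0 ≤ s i)
    (hmono : ∀ i j : Fin m, (i : ℕ) ≤ (j : ℕ) → s j ≤ s i)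
    (ht0 : ∀ i, 0 ≤ t i) (ht1 : ∀ i, t i ≤ 1) (hsum : ∑ i, t i ≤ (r : ℝ)) :
    ∑ i ∈ Finset.univ.filter (fun i : Fin m => r ≤ (i : ℕ)), (s i)^2
      ≤ ∑ i, (s i)^2 * (1 - t i) := by
  by_cases hrm : m ≤ r
  · have h1 : (Finset.univ.filter (fun i : Fin m => r ≤ (i : ℕ))) = ∅ := by
      apply Finset.filter_false_of_mem
      intro i _
      omega
    rw [h1]
    simp only [Finset.sum_empty]
    apply Finset.sum_nonneg
    intro i _
    have := ht1 i
    nlinarith [sq_nonneg (s i)]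
  · push_neg at hrm
    set c : ℝ := s ⟨r, hrm⟩ with hc
    have hsplit : ∑ i, (s i)^2 * (1 - t i)
        = ∑ i ∈ Finset.univ.filter (fun i : Fin m => (i : ℕ) < r), (s i)^2 * (1 - t i)
        + ∑ i ∈ Finset.univ.filter (fun i : Fin m => r ≤ (i : ℕ)), (s i)^2 * (1 - t i) := by
      rw [← Finset.sum_filter_add_sum_filter_not Finset.univ (fun i : Fin m => (i : ℕ) < r)]
      congr 1
      apply Finset.sum_congr _ (fun _ _ => rfl)
      apply Finset.filter_congr
      intro i _
      simp [not_lt]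
    rw [hsplit]
    have key : ∑ i ∈ Finset.univ.filter (fun i : Fin m => r ≤ (i : ℕ)), (s i)^2 * t i
        ≤ ∑ i ∈ Finset.univ.filter (fun i : Fin m => (i : ℕ) < r), (s i)^2 * (1 - t i) := by
      have step1 : ∑ i ∈ Finset.univ.filter (fun i : Fin m => r ≤ (i : ℕ)), (s i)^2 * t i
          ≤ c^2 * ∑ i ∈ Finset.univ.filter (fun i : Fin m => r ≤ (i : ℕ)), t i := by
        rw [Finset.mul_sum]
        apply Finset.sum_le_sum
        intro i hi
        simp only [Finset.mem_filter] at hi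
        have hsi : s i ≤ c := hmono ⟨r, hrm⟩ i hi.2
        have : (s i)^2 ≤ c^2 := by nlinarith [hs0 i]
        nlinarith [ht0 i]
      have step2 : ∑ i ∈ Finset.univ.filter (fun i : Fin m => r ≤ (i : ℕ)), t i
          ≤ ∑ i ∈ Finset.univ.filter (fun i : Fin m => (i : ℕ) < r), (1 - t i) := by
        have h2 : ∑ i ∈ Finset.univ.filter (fun i : Fin m => (i : ℕ) < r), (1 : ℝ) = r := by
          rw [Finset.sum_const, card_filter_lt m r hrm.le]; simp
        have h3 : ∑ i ∈ Finset.univ.filter (fun i : Fin m => (i : ℕ) < r), t i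
            + ∑ i ∈ Finset.univ.filter (fun i : Fin m => r ≤ (i : ℕ)), t i = ∑ i, t i := by
          rw [← Finset.sum_filter_add_sum_filter_not Finset.univ (fun i : Fin m => (i : ℕ) < r)]
          congr 1
          apply Finset.sum_congr _ (fun _ _ => rfl)
          apply Finset.filter_congr
          intro i _
          simp [not_lt]
        rw [Finset.sum_sub_distrib, h2]
        linarith
      have step3 : c^2 * ∑ i ∈ Finset.univ.filter (fun i : Fin m => (i : ℕ) < r), (1 - t i)
          ≤ ∑ i ∈ Finset.univ.filter (fun i : Fin m => (i : ℕ) < r), (s i)^2 * (1 - t i) := by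
        rw [Finset.mul_sum]
        apply Finset.sum_le_sum
        intro i hi
        simp only [Finset.mem_filter] at hi
        have hsi : c ≤ s i := hmono i ⟨r, hrm⟩ (le_of_lt hi.2)
        have hc0 : 0 ≤ c := hs0 ⟨r, hrm⟩
        have : c^2 ≤ (s i)^2 := by nlinarith
        nlinarith [ht1 i, ht0 i]
      calc ∑ i ∈ Finset.univ.filter (fun i : Fin m => r ≤ (i : ℕ)), (s i)^2 * t i
          ≤ c^2 * ∑ i ∈ Finset.univ.filter (fun i : Fin m => r ≤ (i : ℕ)), t i := step1
        _ ≤ c^2 * ∑ i ∈ Finset.univ.filter (fun i : Fin m => (i : ℕ) < r), (1 - t i) := by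
            apply mul_le_mul_of_nonneg_left step2 (sq_nonneg c)
        _ ≤ _ := step3
    have expand : ∑ i ∈ Finset.univ.filter (fun i : Fin m => r ≤ (i : ℕ)), (s i)^2
        = ∑ i ∈ Finset.univ.filter (fun i : Fin m => r ≤ (i : ℕ)), (s i)^2 * (1 - t i)
        + ∑ i ∈ Finset.univ.filter (fun i : Fin m => r ≤ (i : ℕ)), (s i)^2 * t i := by
      rw [← Finset.sum_add_distrib]
      apply Finset.sum_congr rfl
      intro i _
      ring
    linarith

lemma sum_fin_dite (m n : ℕ) (f : Fin m → ℝ) :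
    ∑ j : Fin n, (if h : (j : ℕ) < m then f ⟨j, h⟩ else 0)
      = ∑ i : Fin m, (if (i : ℕ) < n then f i else 0) := by
  set F : ℕ → ℝ := fun k => if h : k < m ∧ k < n then f ⟨k, h.1⟩ else 0 with hF
  have h1 : ∑ j : Fin n, (if h : (j : ℕ) < m then f ⟨j, h⟩ else 0) = ∑ j : Fin n, F j := by
    apply Finset.sum_congr rfl
    intro j _
    simp only [hF]
    rcases lt_or_ge (j : ℕ) m with h | h
    · rw [dif_pos h, dif_pos ⟨h, j.isLt⟩]
    · rw [dif_neg (by omega), dif_neg (by omega)]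
  have h2 : ∑ i : Fin m, (if (i : ℕ) < n then f i else 0) = ∑ i : Fin m, F i := by
    apply Finset.sum_congr rfl
    intro i _
    simp only [hF]
    rcases lt_or_ge (i : ℕ) n with h | h
    · rw [if_pos h, dif_pos ⟨i.isLt, h⟩]
    · rw [if_neg (by omega), dif_neg (by omega)]
  rw [h1, h2, Fin.sum_univ_eq_sum_range F n, Fin.sum_univ_eq_sum_range F m]
  rcases le_total m n with h | h
  · rw [← Finset.sum_subset (Finset.range_subset_range.2 h)]
    intro k hk hk2
    simp only [Finset.mem_range] at hk hk2
    simp only [hF]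
    rw [dif_neg (by omega)]
  · rw [Finset.sum_subset (Finset.range_subset_range.2 h)]
    intro k hk hk2
    simp only [Finset.mem_range] at hk hk2
    simp only [hF]
    rw [dif_neg (by omega)]


lemma euclid_norm_sq {m : ℕ} (v : EuclideanSpace ℝ (Fin m)) : ‖v‖^2 = ∑ i, (v i)^2 := by
  rw [EuclideanSpace.norm_eq, Real.sq_sqrt (by positivity)]
  simp [sq_abs]

lemma pythag_proj {m : ℕ} (S : Submodule ℝ (EuclideanSpace ℝ (Fin m)))
    (u : EuclideanSpace ℝ (Fin m)) :
    ‖u‖^2 = ‖(S.orthogonalProjectionOnto u : EuclideanSpace ℝ (Fin m))‖^2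
      + ‖u - S.orthogonalProjectionOnto u‖^2 := by
  set p : EuclideanSpace ℝ (Fin m) := (S.orthogonalProjectionOnto u : EuclideanSpace ℝ (Fin m)) with hp
  have h : ⟪u - p, p⟫ = 0 :=
    by have h0 := Submodule.starProjection_inner_eq_zero (K := S) u p (S.orthogonalProjectionOnto u).2
       rw [Submodule.starProjection_apply] at h0
       exact h0
  have h2 : ⟪p, u - p⟫ = 0 := by rw [real_inner_comm]; exact h
  have : u = p + (u - p) := by abel
  calc ‖u‖^2 = ‖p + (u - p)‖^2 := by rw [← this]
    _ = ‖p‖^2 + 2 * ⟪p, u - p⟫ + ‖u - p‖^2 := norm_add_sq_real p (u - p)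
    _ = ‖p‖^2 + ‖u - p‖^2 := by rw [h2]; ring

lemma proj_min {m : ℕ} (S : Submodule ℝ (EuclideanSpace ℝ (Fin m)))
    (u w : EuclideanSpace ℝ (Fin m)) (hw : w ∈ S) :
    ‖u - S.orthogonalProjectionOnto u‖ ≤ ‖u - w‖ := by
  rw [← Submodule.starProjection_apply, Submodule.starProjection_minimal]
  exact ciInf_le ⟨0, by rintro x ⟨y, rfl⟩; positivity⟩ (⟨w, hw⟩ : S)

lemma trace_proj {m : ℕ} (S : Submodule ℝ (EuclideanSpace ℝ (Fin m))) :
    ∑ i, ‖(S.orthogonalProjectionOnto (EuclideanSpace.single i (1:ℝ)) : EuclideanSpace ℝ (Fin m))‖^2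
      = (Module.finrank ℝ S : ℝ) := by
  set b := stdOrthonormalBasis ℝ S with hbdef
  set v : Fin (Module.finrank ℝ S) → EuclideanSpace ℝ (Fin m) :=
    fun k => ((b k : S) : EuclideanSpace ℝ (Fin m)) with hv
  have hb : Orthonormal ℝ v := by
    have := b.orthonormal
    rw [orthonormal_iff_ite] at this ⊢
    intro i j
    simpa [hv, Submodule.coe_inner] using this i j
  have hnorm : ∀ u : EuclideanSpace ℝ (Fin m),
      ‖(S.orthogonalProjectionOnto u : EuclideanSpace ℝ (Fin m))‖^2 = ∑ k, ⟪v k, u⟫^2 := by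
    intro u
    have hproj : (S.orthogonalProjectionOnto u : EuclideanSpace ℝ (Fin m))
        = ∑ k, ⟪v k, u⟫ • v k := by
      rw [b.orthogonalProjectionOnto_apply_eq_sum]
      push_cast [Submodule.coe_sum]
      rfl
    rw [← real_inner_self_eq_norm_sq, hproj, hb.inner_sum]
    simp [sq]
  have hrow : ∀ w : EuclideanSpace ℝ (Fin m),
      ∑ i, ⟪w, EuclideanSpace.single i (1:ℝ)⟫^2 = ‖w‖^2 := by
    intro w
    rw [euclid_norm_sq]
    refine Finset.sum_congr rfl fun i _ => ?_
    rw [EuclideanSpace.inner_single_right]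
    simp
  calc ∑ i, ‖(S.orthogonalProjectionOnto (EuclideanSpace.single i (1:ℝ)) : EuclideanSpace ℝ (Fin m))‖^2
      = ∑ i, ∑ k, ⟪v k, EuclideanSpace.single i (1:ℝ)⟫^2 :=
        Finset.sum_congr rfl fun i _ => hnorm _
    _ = ∑ k, ∑ i, ⟪v k, EuclideanSpace.single i (1:ℝ)⟫^2 := Finset.sum_comm
    _ = ∑ k : Fin (Module.finrank ℝ S), ‖v k‖^2 := Finset.sum_congr rfl fun k _ => hrow _
    _ = ∑ k : Fin (Module.finrank ℝ S), 1 := by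
        refine Finset.sum_congr rfl fun k _ => ?_
        rw [hb.1 k]; norm_num
    _ = (Module.finrank ℝ S : ℝ) := by simp

lemma finrank_colSpace_eq_rank {m k : ℕ} (A : Matrix (Fin m) (Fin k) ℝ) :
    Module.finrank ℝ (colSpace A) = A.rank := by
  rw [Matrix.rank]
  have h1 : (Matrix.toEuclideanLin A : EuclideanSpace ℝ (Fin k) →ₗ[ℝ] EuclideanSpace ℝ (Fin m))
      = ((WithLp.linearEquiv 2 ℝ (Fin m → ℝ)).symm.toLinearMap.comp
          (A.mulVecLin.comp (WithLp.linearEquiv 2 ℝ (Fin k → ℝ)).toLinearMap)) := by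
    ext x
    rfl
  have h2 : colSpace A = Submodule.map (((WithLp.linearEquiv 2 ℝ (Fin m → ℝ)).symm : (Fin m → ℝ) ≃ₗ[ℝ] EuclideanSpace ℝ (Fin m)) : (Fin m → ℝ) →ₗ[ℝ] EuclideanSpace ℝ (Fin m)) (LinearMap.range A.mulVecLin) := by
    rw [colSpace, h1, LinearMap.range_comp, LinearMap.range_comp, LinearEquiv.range,
      Submodule.map_top]
  rw [h2, LinearEquiv.finrank_map_eq]

lemma col_mem_colSpace {m k : ℕ} (A : Matrix (Fin m) (Fin k) ℝ) (j : Fin k) :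
    (WithLp.toLp 2 (fun i => A i j) : EuclideanSpace ℝ (Fin m)) ∈ colSpace A := by
  refine ⟨(EuclideanSpace.single j (1:ℝ)), ?_⟩
  ext i
  simp [Matrix.toEuclideanLin_apply, Matrix.mulVec_single]

lemma core_lemma (m n r : ℕ) (D : Matrix (Fin m) (Fin n) ℝ)
    (hDdiag : ∀ (i : Fin m) (j : Fin n), (i : ℕ) ≠ (j : ℕ) → D i j = 0)
    (hDnonneg : ∀ (i : Fin m) (j : Fin n), 0 ≤ D i j)
    (hDmono : ∀ (i i' : Fin m) (j j' : Fin n),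
      (i : ℕ) = (j : ℕ) → (i' : ℕ) = (j' : ℕ) → (i : ℕ) ≤ (i' : ℕ) → D i' j' ≤ D i j)
    (B : Matrix (Fin m) (Fin n) ℝ) (hB : B.rank ≤ r) :
    frobSq (D - Matrix.of fun (i : Fin m) (j : Fin n) => if (i : ℕ) < r then D i j else 0)
      ≤ frobSq (D - B) := by
  classical
  set S : Submodule ℝ (EuclideanSpace ℝ (Fin m)) := colSpace B with hS
  set s : Fin m → ℝ := fun i => if h : (i : ℕ) < n then D i ⟨i, h⟩ else 0 with hs
  set t : Fin m → ℝ := fun i =>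
    ‖(S.orthogonalProjectionOnto (EuclideanSpace.single i (1:ℝ)) : EuclideanSpace ℝ (Fin m))‖^2 with ht
  -- properties of s
  have hs0 : ∀ i, 0 ≤ s i := by
    intro i
    simp only [hs]
    split_ifs with h
    · exact hDnonneg _ _
    · exact le_refl 0
  have hsmono : ∀ i j : Fin m, (i : ℕ) ≤ (j : ℕ) → s j ≤ s i := by
    intro i j hij
    simp only [hs]
    split_ifs with h1 h2 h2
    · exact hDmono i j ⟨i, h2⟩ ⟨j, h1⟩ rfl rfl hij
    · omega
    · exact hDnonneg _ _
    · exact le_refl 0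
  have ht0 : ∀ i, 0 ≤ t i := fun i => sq_nonneg _
  have hsingle_norm : ∀ i : Fin m, ‖(EuclideanSpace.single i (1:ℝ) : EuclideanSpace ℝ (Fin m))‖^2 = 1 := by
    intro i
    rw [euclid_norm_sq]
    rw [Finset.sum_eq_single i]
    · simp
    · intro j _ hji
      simp [EuclideanSpace.single_apply, hji]
    · simp
  have hperp : ∀ i : Fin m,
      ‖(EuclideanSpace.single i (1:ℝ) : EuclideanSpace ℝ (Fin m))
        - S.orthogonalProjectionOnto (EuclideanSpace.single i (1:ℝ))‖^2 = 1 - t i := by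
    intro i
    have := pythag_proj S (EuclideanSpace.single i (1:ℝ))
    rw [hsingle_norm i] at this
    simp only [ht]
    linarith
  have ht1 : ∀ i, t i ≤ 1 := by
    intro i
    have := hperp i
    nlinarith [sq_nonneg (‖(EuclideanSpace.single i (1:ℝ) : EuclideanSpace ℝ (Fin m))
        - S.orthogonalProjectionOnto (EuclideanSpace.single i (1:ℝ))‖)]
  have htsum : ∑ i, t i ≤ (r : ℝ) := by
    have h1 : ∑ i, t i = (Module.finrank ℝ S : ℝ) := trace_proj S
    rw [h1, hS, finrank_colSpace_eq_rank]
    exact_mod_cast hB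
  -- row sums of squares
  have hrow : ∀ i : Fin m, ∑ j, (D i j)^2 = (s i)^2 := by
    intro i
    simp only [hs]
    split_ifs with h
    · rw [Finset.sum_eq_single (⟨(i : ℕ), h⟩ : Fin n)]
      · intro j _ hj
        have : (i : ℕ) ≠ (j : ℕ) := by
          intro hc
          apply hj
          exact Fin.ext hc.symm
        rw [hDdiag i j this]
        simp
      · simp
    · have hz : ∀ j : Fin n, D i j = 0 := fun j => hDdiag i j (by omega)
      simp [hz]
  -- LHS
  have hL : frobSq (D - Matrix.of fun (i : Fin m) (j : Fin n) => if (i : ℕ) < r then D i j else 0)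
      = ∑ i ∈ Finset.univ.filter (fun i : Fin m => r ≤ (i : ℕ)), (s i)^2 := by
    unfold frobSq
    rw [← Finset.sum_filter_add_sum_filter_not Finset.univ (fun i : Fin m => r ≤ (i : ℕ))]
    have hz : ∑ i ∈ Finset.univ.filter (fun i : Fin m => ¬ r ≤ (i : ℕ)),
        ∑ j, ((D - Matrix.of fun (i : Fin m) (j : Fin n) => if (i : ℕ) < r then D i j else 0) i j)^2 = 0 := by
      apply Finset.sum_eq_zero
      intro i hi
      simp only [Finset.mem_filter, not_le] at hi
      apply Finset.sum_eq_zero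
      intro j _
      simp [Matrix.sub_apply, if_pos hi.2]
    have hm : ∑ i ∈ Finset.univ.filter (fun i : Fin m => r ≤ (i : ℕ)),
        ∑ j, ((D - Matrix.of fun (i : Fin m) (j : Fin n) => if (i : ℕ) < r then D i j else 0) i j)^2
        = ∑ i ∈ Finset.univ.filter (fun i : Fin m => r ≤ (i : ℕ)), (s i)^2 := by
      apply Finset.sum_congr rfl
      intro i hi
      simp only [Finset.mem_filter] at hi
      rw [← hrow i]
      apply Finset.sum_congr rfl
      intro j _
      have : ¬ ((i : ℕ) < r) := by omega
      simp [Matrix.sub_apply, if_neg this]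
    rw [hm, hz, add_zero]
  rw [hL]
  -- RHS: column norms
  set u : Fin n → EuclideanSpace ℝ (Fin m) := fun j => WithLp.toLp 2 (fun i => D i j) with hu
  set w : Fin n → EuclideanSpace ℝ (Fin m) := fun j => WithLp.toLp 2 (fun i => B i j) with hw
  have hR : frobSq (D - B) = ∑ j, ‖u j - w j‖^2 := by
    unfold frobSq
    rw [Finset.sum_comm]
    apply Finset.sum_congr rfl
    intro j _
    rw [euclid_norm_sq]
    apply Finset.sum_congr rfl
    intro i _
    simp [hu, hw, Matrix.sub_apply]
  have hproj_col : ∀ j : Fin n, ‖u j - S.orthogonalProjectionOnto (u j)‖^2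
      = if h : (j : ℕ) < m then (s ⟨j, h⟩)^2 * (1 - t ⟨j, h⟩) else 0 := by
    intro j
    split_ifs with h
    · set ii : Fin m := ⟨(j : ℕ), h⟩ with hii
      have hcol : u j = D ii j • (EuclideanSpace.single ii (1:ℝ)) := by
        ext i
        by_cases hij : i = ii
        · subst hij
          simp [hu, EuclideanSpace.single_apply]
        · have : (i : ℕ) ≠ (j : ℕ) := by
            intro hc
            exact hij (Fin.ext hc)
          simp [hu, hDdiag i j this, EuclideanSpace.single_apply, hij]
      have hin : ((ii : Fin m) : ℕ) < n := by simpa [hii] using j.isLt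
      have hsval : D ii j = s ii := by
        simp only [hs]
        rw [dif_pos hin]
      have hsmul : u j - S.orthogonalProjectionOnto (u j)
          = D ii j • ((EuclideanSpace.single ii (1:ℝ) : EuclideanSpace ℝ (Fin m))
              - S.orthogonalProjectionOnto (EuclideanSpace.single ii (1:ℝ))) := by
        rw [hcol, _root_.map_smul]
        rw [smul_sub]
        congr 1
      rw [hsmul, norm_smul]
      rw [mul_pow, ← hperp ii, hsval]
      simp [sq_abs]
    · have hcol : u j = 0 := by
        ext i
        have : (i : ℕ) ≠ (j : ℕ) := by omega
        simp [hu, hDdiag i j this]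
      rw [hcol]
      simp
  have hstep : ∀ j : Fin n, ‖u j - S.orthogonalProjectionOnto (u j)‖^2 ≤ ‖u j - w j‖^2 := by
    intro j
    have h1 : ‖u j - S.orthogonalProjectionOnto (u j)‖ ≤ ‖u j - w j‖ :=
      proj_min S (u j) (w j) (col_mem_colSpace B j)
    exact pow_le_pow_left₀ (norm_nonneg _) h1 2
  have hchain : ∑ i, (s i)^2 * (1 - t i) ≤ frobSq (D - B) := by
    rw [hR]
    calc ∑ i, (s i)^2 * (1 - t i)
        = ∑ i : Fin m, (if (i : ℕ) < n then (s i)^2 * (1 - t i) else 0) := by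
          apply Finset.sum_congr rfl
          intro i _
          split_ifs with h
          · rfl
          · have : s i = 0 := by simp only [hs]; rw [dif_neg h]
            rw [this]
            ring
      _ = ∑ j : Fin n, (if h : (j : ℕ) < m then (s ⟨j, h⟩)^2 * (1 - t ⟨j, h⟩) else 0) :=
          (sum_fin_dite m n _).symm
      _ = ∑ j, ‖u j - S.orthogonalProjectionOnto (u j)‖^2 := by
          apply Finset.sum_congr rfl
          intro j _
          rw [hproj_col j]
      _ ≤ ∑ j, ‖u j - w j‖^2 := Finset.sum_le_sum fun j _ => hstep j
  have hmid := key_scalar m r s t hs0 hsmono ht0 ht1 htsum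
  linarith

lemma frobNorm_eq_sqrt_frobSq {m n : ℕ} (A : Matrix (Fin m) (Fin n) ℝ) :
    frobNorm A = Real.sqrt (frobSq A) := rfl

/-- Eckart–Young theorem for the Frobenius norm: if `A = P D Qᵀ` is an SVD of `A`
(`P`, `Q` orthogonal, `D` rectangular-diagonal with nonnegative, non-increasing
diagonal entries), then the hard-thresholded matrix `H_r(A) = P D_r Qᵀ`, where `D_r`
keeps the `r` largest diagonal entries of `D` and zeroes the rest, has rank at most
`r` and is a best rank-`r` approximation of `A` in the Frobenius norm. -/
theorem eckart_young_hard_thresholding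
    (m n r : ℕ)
    (A : Matrix (Fin m) (Fin n) ℝ)
    (P : Matrix (Fin m) (Fin m) ℝ) (Q : Matrix (Fin n) (Fin n) ℝ)
    (D : Matrix (Fin m) (Fin n) ℝ)
    (hP : P ∈ Matrix.orthogonalGroup (Fin m) ℝ)
    (hQ : Q ∈ Matrix.orthogonalGroup (Fin n) ℝ)
    (hDdiag : ∀ (i : Fin m) (j : Fin n), (i : ℕ) ≠ (j : ℕ) → D i j = 0)
    (hDnonneg : ∀ (i : Fin m) (j : Fin n), 0 ≤ D i j)
    (hDmono : ∀ (i i' : Fin m) (j j' : Fin n),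
      (i : ℕ) = (j : ℕ) → (i' : ℕ) = (j' : ℕ) → (i : ℕ) ≤ (i' : ℕ) → D i' j' ≤ D i j)
    (hA : A = P * D * Qᵀ) :
    (P * (Matrix.of fun (i : Fin m) (j : Fin n) => if (i : ℕ) < r then D i j else 0) * Qᵀ).rank ≤ r ∧
    ∀ B : Matrix (Fin m) (Fin n) ℝ, B.rank ≤ r →
      frobNorm (A - P * (Matrix.of fun (i : Fin m) (j : Fin n) => if (i : ℕ) < r then D i j else 0) * Qᵀ) ≤
        frobNorm (A - B) := by
  have hPP : P * Pᵀ = 1 := by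
    have h := Matrix.mem_unitaryGroup_iff.mp hP
    rwa [Matrix.star_eq_conjTranspose, Matrix.conjTranspose_eq_transpose_of_trivial] at h
  have hPtP : Pᵀ * P = 1 := by
    have h := Matrix.mem_unitaryGroup_iff'.mp hP
    rwa [Matrix.star_eq_conjTranspose, Matrix.conjTranspose_eq_transpose_of_trivial] at h
  have hQQ : Q * Qᵀ = 1 := by
    have h := Matrix.mem_unitaryGroup_iff.mp hQ
    rwa [Matrix.star_eq_conjTranspose, Matrix.conjTranspose_eq_transpose_of_trivial] at h
  have hQtQ : Qᵀ * Q = 1 := by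
    have h := Matrix.mem_unitaryGroup_iff'.mp hQ
    rwa [Matrix.star_eq_conjTranspose, Matrix.conjTranspose_eq_transpose_of_trivial] at h
  set Dr : Matrix (Fin m) (Fin n) ℝ :=
    Matrix.of fun (i : Fin m) (j : Fin n) => if (i : ℕ) < r then D i j else 0 with hDr
  constructor
  · -- rank bound
    have hfac : Dr = (Matrix.diagonal fun i : Fin m => if (i : ℕ) < r then (1:ℝ) else 0) * D := by
      ext i j
      rw [Matrix.diagonal_mul]
      simp only [hDr, Matrix.of_apply]
      split_ifs <;> simp
    have hdiag_rank : (Matrix.diagonal fun i : Fin m => if (i : ℕ) < r then (1:ℝ) else 0).rank ≤ r := by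
      rw [Matrix.rank_diagonal]
      have hcard : Fintype.card {i : Fin m // (if (i : ℕ) < r then (1:ℝ) else 0) ≠ 0}
          = (Finset.univ.filter (fun i : Fin m => (i : ℕ) < r)).card := by
        rw [Fintype.card_subtype]
        congr 1
        apply Finset.filter_congr
        intro i _
        split_ifs with h <;> simp [h]
      rw [hcard]
      rcases le_total r m with h | h
      · rw [card_filter_lt m r h]
      · calc (Finset.univ.filter (fun i : Fin m => (i : ℕ) < r)).card
            ≤ Finset.univ.card := Finset.card_le_card (Finset.filter_subset _ _)
          _ = m := by simp
          _ ≤ r := h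
    calc (P * Dr * Qᵀ).rank ≤ (P * Dr).rank := Matrix.rank_mul_le_left _ _
      _ ≤ Dr.rank := Matrix.rank_mul_le_right _ _
      _ ≤ (Matrix.diagonal fun i : Fin m => if (i : ℕ) < r then (1:ℝ) else 0).rank := by
          rw [hfac]; exact Matrix.rank_mul_le_left _ _
      _ ≤ r := hdiag_rank
  · intro B hB
    set B' : Matrix (Fin m) (Fin n) ℝ := Pᵀ * B * Q with hB'
    have hB'rank : B'.rank ≤ r :=
      calc B'.rank ≤ (Pᵀ * B).rank := Matrix.rank_mul_le_left _ _
        _ ≤ B.rank := Matrix.rank_mul_le_right _ _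
        _ ≤ r := hB
    have hsub : ∀ X : Matrix (Fin m) (Fin n) ℝ,
        P * ((D - X) * Qᵀ) = P * D * Qᵀ - P * X * Qᵀ := by
      intro X
      simp [Matrix.sub_mul, Matrix.mul_sub, Matrix.mul_assoc]
    have h4 : P * B' * Qᵀ = B := by
      rw [hB']
      simp only [← Matrix.mul_assoc]
      rw [hPP, Matrix.one_mul, Matrix.mul_assoc, hQQ, Matrix.mul_one]
    have h1 : frobSq (A - P * Dr * Qᵀ) = frobSq (D - Dr) := by
      rw [hA, ← hsub Dr, ← Matrix.mul_assoc, frobSq_orth_right _ _ hQtQ,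
        frobSq_orth_left _ _ hPtP]
    have h2 : frobSq (A - B) = frobSq (D - B') := by
      rw [hA, ← h4, ← hsub B', ← Matrix.mul_assoc, frobSq_orth_right _ _ hQtQ,
        frobSq_orth_left _ _ hPtP]
    have hcore := core_lemma m n r D hDdiag hDnonneg hDmono B' hB'rank
    rw [frobNorm_eq_sqrt_frobSq, frobNorm_eq_sqrt_frobSq]
    apply Real.sqrt_le_sqrt
    rw [h1, h2]
    exact hcore
end

section
/- Let X₁ ∈ ℝ^{m×k} with rank(X₁) = k and let k ≤ r. Then for a matrix X₂ ∈ ℝ^{m×(n−k)} the following are equivalent: (i) rank(X₁ X₂) ≤ r; (ii) there exist matrices C ∈ ℝ^{k×(n−k)}, B ∈ ℝ^{m×(r−k)}, and D ∈ ℝ^{(r−k)×(n−k)} such that X₂ = X₁ C + B D. (This is the parametrization of the feasible set of the rank-constrained weighted low-rank problem (7) used to derive the reduced problem (9).) -/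
open Matrix

lemma range_fromColumns_aux {m a b : ℕ} (A : Matrix (Fin m) (Fin a) ℝ)
    (B : Matrix (Fin m) (Fin b) ℝ) :
    LinearMap.range (fromCols A B).mulVecLin =
      LinearMap.range A.mulVecLin ⊔ LinearMap.range B.mulVecLin := by
  apply le_antisymm
  · rintro x ⟨v, rfl⟩
    rw [mulVecLin_apply, ← Sum.elim_comp_inl_inr v, fromCols_mulVec_sumElim]
    exact Submodule.add_mem_sup ⟨_, rfl⟩ ⟨_, rfl⟩
  · rw [sup_le_iff]
    constructor
    · rintro x ⟨v, rfl⟩; exact ⟨Sum.elim v 0, by simp⟩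
    · rintro x ⟨v, rfl⟩; exact ⟨Sum.elim 0 v, by simp⟩

/-- Parametrization of the feasible set of the rank-constrained problem: if
`rank X₁ = k ≤ r`, then `rank (X₁ X₂) ≤ r` iff `X₂ = X₁ C + B D` for some matrices
`C ∈ ℝ^{k×(n−k)}`, `B ∈ ℝ^{m×(r−k)}`, `D ∈ ℝ^{(r−k)×(n−k)}`. -/
theorem rank_constraint_factorization
    (m k l r : ℕ) (hkr : k ≤ r)
    (X₁ : Matrix (Fin m) (Fin k) ℝ) (hX₁ : X₁.rank = k)
    (X₂ : Matrix (Fin m) (Fin l) ℝ) :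
    (Matrix.fromCols X₁ X₂).rank ≤ r ↔
      ∃ (C : Matrix (Fin k) (Fin l) ℝ) (B : Matrix (Fin m) (Fin (r - k)) ℝ)
        (D : Matrix (Fin (r - k)) (Fin l) ℝ), X₂ = X₁ * C + B * D := by
  constructor
  · intro hrank
    -- left inverse of X₁
    have hker : LinearMap.ker X₁.mulVecLin = ⊥ := by
      have h1 := LinearMap.finrank_range_add_finrank_ker X₁.mulVecLin
      rw [show Module.finrank ℝ (LinearMap.range X₁.mulVecLin) = X₁.rank from rfl, hX₁,
        Module.finrank_pi, Fintype.card_fin] at h1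
      have h2 : Module.finrank ℝ (LinearMap.ker X₁.mulVecLin) = 0 := by omega
      exact Submodule.finrank_eq_zero.mp h2
    obtain ⟨g, hg⟩ := LinearMap.exists_leftInverse_of_injective X₁.mulVecLin hker
    set P : Matrix (Fin k) (Fin m) ℝ := LinearMap.toMatrix' g with hP
    have hPX₁ : P * X₁ = 1 := by
      apply Matrix.toLin'.injective
      rw [Matrix.toLin'_mul, Matrix.toLin'_one, hP, Matrix.toLin'_toMatrix']
      exact hg
    set C : Matrix (Fin k) (Fin l) ℝ := P * X₂ with hC
    set R : Matrix (Fin m) (Fin l) ℝ := X₂ - X₁ * C with hR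
    have hPR : P * R = 0 := by
      rw [hR, Matrix.mul_sub, ← Matrix.mul_assoc, hPX₁, Matrix.one_mul, hC, sub_self]
    -- rank of fromColumns X₁ R equals rank of fromColumns X₁ X₂
    have hfac : fromCols X₁ X₂ * fromBlocks (1 : Matrix (Fin k) (Fin k) ℝ) (-C)
        (0 : Matrix (Fin l) (Fin k) ℝ) 1 = fromCols X₁ R := by
      rw [fromCols_mul_fromBlocks]
      congr 1 <;> simp [hR, sub_eq_add_neg, add_comm]
    have hdet : IsUnit (fromBlocks (1 : Matrix (Fin k) (Fin k) ℝ) (-C)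
        (0 : Matrix (Fin l) (Fin k) ℝ) 1).det := by
      rw [Matrix.det_fromBlocks_zero₂₁]
      simp
    have hrankR' : (fromCols X₁ R).rank ≤ r := by
      rw [← hfac, Matrix.rank_mul_eq_left_of_isUnit_det _ _ hdet]
      exact hrank
    -- ranges of X₁ and R are disjoint
    have hdisj : LinearMap.range X₁.mulVecLin ⊓ LinearMap.range R.mulVecLin = ⊥ := by
      rw [Submodule.eq_bot_iff]
      rintro x ⟨⟨u, hu⟩, ⟨v, hv⟩⟩
      have h1 : P *ᵥ x = u := by
        rw [← hu, mulVecLin_apply, Matrix.mulVec_mulVec, hPX₁, Matrix.one_mulVec]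
      have h2 : P *ᵥ x = 0 := by
        rw [← hv, mulVecLin_apply, Matrix.mulVec_mulVec, hPR, Matrix.zero_mulVec]
      have hu0 : u = 0 := h1.symm.trans h2
      rw [← hu, hu0, map_zero]
    have hsum := Submodule.finrank_sup_add_finrank_inf_eq
      (LinearMap.range X₁.mulVecLin) (LinearMap.range R.mulVecLin)
    rw [hdisj, finrank_bot, add_zero] at hsum
    have hrankfc : (fromCols X₁ R).rank = k + R.rank := by
      rw [Matrix.rank, range_fromColumns_aux, hsum,
        show Module.finrank ℝ (LinearMap.range X₁.mulVecLin) = X₁.rank from rfl, hX₁]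
      rfl
    have hRrank : R.rank ≤ r - k := by omega
    -- factor R = B * D
    set W := LinearMap.range R.mulVecLin with hW
    have hWrank : Module.finrank ℝ W = R.rank := rfl
    let b : Module.Basis (Fin R.rank) ℝ W := Module.finBasisOfFinrankEq ℝ W hWrank
    set B : Matrix (Fin m) (Fin (r - k)) ℝ :=
      Matrix.of (fun i x => if h : (x : ℕ) < R.rank then ((b ⟨x, h⟩ : Fin m → ℝ) i) else 0)
      with hB
    have hcolsB : W ≤ LinearMap.range B.mulVecLin := by
      have hspan : W = Submodule.span ℝ (Set.range (fun j => (b j : Fin m → ℝ))) := by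
        have h := congrArg (Submodule.map W.subtype) b.span_eq
        rw [Submodule.map_span, Submodule.map_top, Submodule.range_subtype,
          ← Set.range_comp] at h
        exact h.symm
      rw [hspan, Submodule.span_le]
      rintro x ⟨j, rfl⟩
      refine ⟨Pi.single (Fin.castLE hRrank j) 1, ?_⟩
      ext i
      simp only [mulVecLin_apply, Matrix.mulVec_single, hB, Matrix.of_apply]
      have : ((Fin.castLE hRrank j : Fin (r - k)) : ℕ) < R.rank := by
        simpa using j.isLt
      have hj : (⟨((Fin.castLE hRrank j : Fin (r - k)) : ℕ), this⟩ : Fin R.rank) = j :=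
        Fin.ext (by simp)
      simp only [Pi.smul_apply, Matrix.col_apply, Matrix.of_apply, op_smul_eq_smul, smul_eq_mul,
        one_mul, mul_one]
      rw [dif_pos this, hj]
    have hcolR : ∀ j, (fun i => R i j) ∈ W := by
      intro j
      refine ⟨Pi.single j 1, ?_⟩
      ext i
      simp [mulVecLin_apply, Matrix.mulVec_single]
    choose d hd using fun j => hcolsB (hcolR j)
    set D : Matrix (Fin (r - k)) (Fin l) ℝ := Matrix.of (fun i j => d j i) with hD
    refine ⟨C, B, D, ?_⟩
    have hRBD : R = B * D := by
      ext i j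
      have := congrFun (hd j) i
      simp only [mulVecLin_apply] at this
      rw [Matrix.mul_apply]
      rw [← this]
      simp [Matrix.mulVec, dotProduct, hD]
    rw [← hRBD, hR]
    abel
  · rintro ⟨C, B, D, rfl⟩
    rw [Matrix.rank, range_fromColumns_aux]
    have hle : LinearMap.range (X₁ * C + B * D).mulVecLin ≤
        LinearMap.range X₁.mulVecLin ⊔ LinearMap.range B.mulVecLin := by
      rintro x ⟨v, rfl⟩
      rw [mulVecLin_apply, Matrix.add_mulVec, ← Matrix.mulVec_mulVec, ← Matrix.mulVec_mulVec]
      exact Submodule.add_mem_sup ⟨_, rfl⟩ ⟨_, rfl⟩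
    calc Module.finrank ℝ ↥(LinearMap.range X₁.mulVecLin ⊔
            LinearMap.range (X₁ * C + B * D).mulVecLin)
        ≤ Module.finrank ℝ ↥(LinearMap.range X₁.mulVecLin ⊔ LinearMap.range B.mulVecLin) := by
          apply Submodule.finrank_mono
          exact sup_le le_sup_left hle
      _ ≤ Module.finrank ℝ ↥(LinearMap.range X₁.mulVecLin) +
            Module.finrank ℝ ↥(LinearMap.range B.mulVecLin) :=
          Submodule.finrank_add_le_finrank_add_finrank _ _
      _ ≤ k + (r - k) := by
          apply add_le_add
          · exact le_of_eq hX₁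
          · exact (Matrix.rank_le_card_width B).trans (by simp)
      _ ≤ r := by omega
end
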